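/- A face σ of the boundary of the d-dimensional cross-polytope belongs to B(i,d) if and only if the filling Fill_d(σ) has switch set of size at most i; moreover for any facet τ' ⊇ σ, |S(Fill_d(σ))| ≤ |S(τ')|. -/

import Mathlib

/-- The switch set of a word `u` of length `d` over the alphabet {x,y}. -/
def sw (d : ℕ) (u : ℕ → Bool) : Finset ℕ :=
  (Finset.Ico 1 d).filter (fun j => u j ≠ u (j + 1))

/-- The facet of the boundary of the `d`-cross-polytope corresponding to the
word `u`. -/
def facetOf (d : ℕ) (u : ℕ → Bool) : Finset (ℕ × Bool) :=
  (Finset.Icc 1 d).image (fun j => (j, u j))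

/-- The word of the filling of the face with selected positions `J` and
letters `z`: each position `j` takes the letter of the smallest selected
position `≥ j`, and positions above the largest selected position take its
letter. -/
def fillWord (J : Finset ℕ) (z : ℕ → Bool) : ℕ → Bool :=
  fun j =>
    if h : (J.filter (fun k => j ≤ k)).Nonempty then
      z ((J.filter (fun k => j ≤ k)).min' h)
    else if h2 : J.Nonempty then z (J.max' h2) else false

lemma fillWord_pos (J : Finset ℕ) (z : ℕ → Bool) (j : ℕ)
    (h : (J.filter (fun k => j ≤ k)).Nonempty) :
    fillWord J z j = z ((J.filter (fun k => j ≤ k)).min' h) := dif_pos h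

lemma fillWord_neg (J : Finset ℕ) (z : ℕ → Bool) (j : ℕ)
    (h : ¬ (J.filter (fun k => j ≤ k)).Nonempty) (h2 : J.Nonempty) :
    fillWord J z j = z (J.max' h2) := by
  show dite _ _ _ = _
  rw [dif_neg h, dif_pos h2]

lemma fill_mem (J : Finset ℕ) (z : ℕ → Bool) {j : ℕ} (hj : j ∈ J) :
    fillWord J z j = z j := by
  have hmem : j ∈ J.filter (fun k => j ≤ k) := by simp [hj]
  have hne : (J.filter (fun k => j ≤ k)).Nonempty := ⟨j, hmem⟩
  rw [fillWord_pos J z j hne]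
  congr 1
  have h1 := Finset.min'_le _ j hmem
  have h2 := (Finset.mem_filter.mp (Finset.min'_mem _ hne)).2
  omega

lemma exists_switch (u : ℕ → Bool) : ∀ b a, a < b → u a ≠ u b →
    ∃ l, a ≤ l ∧ l < b ∧ u l ≠ u (l + 1) := by
  intro b
  induction b with
  | zero => intro a h; omega
  | succ b ih =>
    intro a hab hne
    by_cases h : u b = u (b + 1)
    · have hab' : a < b := by
        rcases Nat.lt_succ_iff_lt_or_eq.mp hab with h' | h'
        · exact h'
        · subst h'; exact absurd h hne
      have hne' : u a ≠ u b := by rw [h]; exact hne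
      obtain ⟨l, h1, h2, h3⟩ := ih a hab' hne'
      exact ⟨l, h1, by omega, h3⟩
    · exact ⟨b, by omega, by omega, h⟩

lemma switch_struct (d : ℕ) (J : Finset ℕ) (z : ℕ → Bool) (hJ : J.Nonempty) {j : ℕ}
    (hj : j ∈ sw d (fillWord J z)) :
    j ∈ J ∧ ∃ k, k ∈ J ∧ j < k ∧ z j ≠ z k ∧ ∀ l ∈ J, j < l → k ≤ l := by
  rw [sw, Finset.mem_filter, Finset.mem_Ico] at hj
  obtain ⟨⟨h1, h2⟩, hne⟩ := hj
  by_cases hF : (J.filter (fun k => j + 1 ≤ k)).Nonempty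
  · set k := (J.filter (fun k => j + 1 ≤ k)).min' hF with hk
    have hkmem := Finset.mem_filter.mp (Finset.min'_mem _ hF)
    have hfill1 : fillWord J z (j + 1) = z k := fillWord_pos J z (j + 1) hF
    have hjJ : j ∈ J := by
      by_contra hjJ
      have hFj : (J.filter (fun m => j ≤ m)).Nonempty :=
        ⟨k, Finset.mem_filter.mpr ⟨hkmem.1, by omega⟩⟩
      have hfill0 : fillWord J z j = z ((J.filter (fun m => j ≤ m)).min' hFj) :=
        fillWord_pos J z j hFj
      have hmeq : (J.filter (fun m => j ≤ m)).min' hFj = k := by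
        have hle1 : (J.filter (fun m => j ≤ m)).min' hFj ≤ k :=
          Finset.min'_le _ k (Finset.mem_filter.mpr ⟨hkmem.1, by omega⟩)
        have hmm := Finset.mem_filter.mp (Finset.min'_mem _ hFj)
        have hne2 : (J.filter (fun m => j ≤ m)).min' hFj ≠ j := by
          intro h; exact hjJ (h ▸ hmm.1)
        have hge : j + 1 ≤ (J.filter (fun m => j ≤ m)).min' hFj := by
          have := hmm.2; omega
        have hle2 : k ≤ (J.filter (fun m => j ≤ m)).min' hFj :=
          Finset.min'_le _ _ (Finset.mem_filter.mpr ⟨hmm.1, hge⟩)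
        omega
      rw [hfill0, hmeq, ← hfill1] at hne
      exact hne rfl
    refine ⟨hjJ, k, hkmem.1, by omega, ?_, ?_⟩
    · have hfill0 : fillWord J z j = z j := fill_mem J z hjJ
      rw [hfill0, hfill1] at hne
      exact hne
    · intro l hl hjl
      exact Finset.min'_le _ l (Finset.mem_filter.mpr ⟨hl, by omega⟩)
  · exfalso
    have hfill1 : fillWord J z (j + 1) = z (J.max' hJ) := fillWord_neg J z (j + 1) hF hJ
    have hmaxle : J.max' hJ ≤ j := by
      by_contra h
      exact hF ⟨J.max' hJ, Finset.mem_filter.mpr ⟨J.max'_mem hJ, by omega⟩⟩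
    by_cases hjJ : j ∈ J
    · have hmax : J.max' hJ = j := le_antisymm hmaxle (Finset.le_max' J j hjJ)
      have hfill0 : fillWord J z j = z j := fill_mem J z hjJ
      rw [hfill0, hfill1, hmax] at hne
      exact hne rfl
    · have hF0 : ¬ (J.filter (fun m => j ≤ m)).Nonempty := by
        rintro ⟨a, ha⟩
        obtain ⟨haJ, hale⟩ := Finset.mem_filter.mp ha
        have : a ≤ J.max' hJ := Finset.le_max' J a haJ
        have : a = j := by omega
        exact hjJ (this ▸ haJ)
      have hfill0 : fillWord J z j = z (J.max' hJ) := fillWord_neg J z j hF0 hJ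
      rw [hfill0, hfill1] at hne
      exact hne rfl

/-- A face `σ = {(j, z j) : j ∈ J}` of the cross-polytope boundary is a face
of `B(i,d)` iff its filling has at most `i` switches; moreover the filling has
the fewest switches among all facets containing `σ`. -/
theorem stmt15 (d i : ℕ) (hd : 1 ≤ d) (J : Finset ℕ) (hJ : J.Nonempty)
    (hJd : J ⊆ Finset.Icc 1 d) (z : ℕ → Bool) :
    ((∃ u : ℕ → Bool, (sw d u).card ≤ i ∧
        J.image (fun j => (j, z j)) ⊆ facetOf d u) ↔
      (sw d (fillWord J z)).card ≤ i) ∧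
    ∀ u : ℕ → Bool, J.image (fun j => (j, z j)) ⊆ facetOf d u →
      (sw d (fillWord J z)).card ≤ (sw d u).card := by
  have hmemJ : ∀ a ∈ J, 1 ≤ a ∧ a ≤ d := fun a ha => Finset.mem_Icc.mp (hJd ha)
  have hsub : ∀ u : ℕ → Bool,
      (J.image (fun j => (j, z j)) ⊆ facetOf d u) ↔ ∀ j ∈ J, u j = z j := by
    intro u
    constructor
    · intro h j hj
      have hmem : (j, z j) ∈ facetOf d u := h (Finset.mem_image_of_mem _ hj)
      rw [facetOf] at hmem
      obtain ⟨a, _, hae⟩ := Finset.mem_image.mp hmem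
      obtain ⟨h1, h2⟩ := Prod.mk.injEq .. ▸ hae
      rw [← h1] at h2 ⊢
      exact h2
    · intro h p hp
      obtain ⟨j, hj, rfl⟩ := Finset.mem_image.mp hp
      rw [facetOf]
      exact Finset.mem_image.mpr ⟨j, hJd hj, by rw [h j hj]⟩
  have main : ∀ u : ℕ → Bool, (∀ j ∈ J, u j = z j) →
      (sw d (fillWord J z)).card ≤ (sw d u).card := by
    intro u hu
    have hC : ∀ j, ∃ k l, j ∈ sw d (fillWord J z) →
        j ∈ J ∧ k ∈ J ∧ j < k ∧ (∀ m ∈ J, j < m → k ≤ m) ∧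
          j ≤ l ∧ l < k ∧ u l ≠ u (l + 1) := by
      intro j
      by_cases hj : j ∈ sw d (fillWord J z)
      · obtain ⟨hjJ, k, hkJ, hjk, hzz, hmin⟩ := switch_struct d J z hJ hj
        have huz : u j ≠ u k := by rw [hu j hjJ, hu k hkJ]; exact hzz
        obtain ⟨l, hl1, hl2, hl3⟩ := exists_switch u k j hjk huz
        exact ⟨k, l, fun _ => ⟨hjJ, hkJ, hjk, hmin, hl1, hl2, hl3⟩⟩
      · exact ⟨0, 0, fun h => absurd h hj⟩
    choose k l hkl using hC
    apply Finset.card_le_card_of_injOn l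
    · intro j hj
      obtain ⟨hjJ, hkJ, hjk, hmin, hl1, hl2, hl3⟩ := hkl j hj
      have hkd := (hmemJ _ hkJ).2
      have hj1 := (hmemJ _ hjJ).1
      rw [sw, Finset.mem_coe, Finset.mem_filter, Finset.mem_Ico]
      exact ⟨⟨by omega, by omega⟩, hl3⟩
    · have hmono : ∀ a ∈ sw d (fillWord J z), ∀ b ∈ sw d (fillWord J z),
          a < b → l a < l b := by
        intro a ha b hb hab
        obtain ⟨haJ, hkaJ, hak, hamin, hal1, hal2, _⟩ := hkl a ha
        obtain ⟨hbJ, _, _, _, hbl1, _, _⟩ := hkl b hb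
        have : k a ≤ b := hamin b hbJ hab
        omega
      intro a ha b hb hab
      rcases lt_trichotomy a b with h | h | h
      · exact absurd hab (hmono a ha b hb h).ne
      · exact h
      · exact absurd hab.symm (hmono b hb a ha h).ne
  refine ⟨⟨?_, ?_⟩, fun u hu => main u ((hsub u).mp hu)⟩
  · rintro ⟨u, hcard, hsubu⟩
    exact le_trans (main u ((hsub u).mp hsubu)) hcard
  · intro hcard
    exact ⟨fillWord J z, hcard, (hsub _).mpr (fun j hj => fill_mem J z hj)⟩
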